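/- arXiv:2003.09107 — 8 statements merged into one kernel-verified Lean document; each statement's English description precedes it below -/
import Mathlib

section
/- Let L be a finite-dimensional Lie algebra over ℂ, g a Lie algebra automorphism of L, and λ, μ ∈ ℂ. If x belongs to the generalized eigenspace of g with eigenvalue λ and y belongs to the generalized eigenspace of g with eigenvalue μ, then the bracket ⁅x, y⁆ belongs to the generalized eigenspace of g with eigenvalue λ·μ. -/
private lemma key_identity
    {L : Type*} [LieRing L] [LieAlgebra ℂ L]
    (g : L ≃ₗ⁅ℂ⁆ L) (lam mu : ℂ) (x y : L) :
    (g.toLinearEquiv.toLinearMap - (lam * mu) • (1 : Module.End ℂ L)) ⁅x, y⁆ =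
      ⁅(g.toLinearEquiv.toLinearMap - lam • (1 : Module.End ℂ L)) x, g y⁆ +
        lam • ⁅x, (g.toLinearEquiv.toLinearMap - mu • (1 : Module.End ℂ L)) y⁆ := by
  have h : g.toLinearEquiv.toLinearMap ⁅x, y⁆ = ⁅g x, g y⁆ := by
    simpa using g.map_lie x y
  have hz : ∀ z : L, g.toLinearEquiv.toLinearMap z = g z := fun _ => rfl
  simp only [LinearMap.sub_apply, LinearMap.smul_apply, Module.End.one_apply, h, hz,
    sub_lie, lie_sub, smul_lie, lie_smul, smul_sub, smul_smul]
  abel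

private lemma key_aux
    {L : Type*} [LieRing L] [LieAlgebra ℂ L]
    (g : L ≃ₗ⁅ℂ⁆ L) (lam mu : ℂ) :
    ∀ n k l : ℕ, k + l ≤ n → ∀ x y : L,
      ((g.toLinearEquiv.toLinearMap - lam • (1 : Module.End ℂ L)) ^ k) x = 0 →
      ((g.toLinearEquiv.toLinearMap - mu • (1 : Module.End ℂ L)) ^ l) y = 0 →
      ((g.toLinearEquiv.toLinearMap - (lam * mu) • (1 : Module.End ℂ L)) ^ (k + l)) ⁅x, y⁆ = 0 := by
  intro n
  induction n with
  | zero =>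
    intro k l hkl x y hx hy
    have hk0 : k = 0 := by omega
    subst hk0
    simp only [pow_zero, Module.End.one_apply] at hx
    simp [hx]
  | succ n ih =>
    intro k l hkl x y hx hy
    match k, l with
    | 0, l =>
      simp only [pow_zero, Module.End.one_apply] at hx
      simp [hx]
    | k + 1, 0 =>
      simp only [pow_zero, Module.End.one_apply] at hy
      simp [hy]
    | k + 1, l + 1 =>
      set G := g.toLinearEquiv.toLinearMap with hG
      have step : ((G - (lam * mu) • 1) ^ (k + 1 + (l + 1))) ⁅x, y⁆ =
          ((G - (lam * mu) • 1) ^ (k + 1 + l)) ((G - (lam * mu) • 1) ⁅x, y⁆) := by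
        have : k + 1 + (l + 1) = (k + 1 + l) + 1 := by ring
        rw [this, pow_succ, Module.End.mul_apply]
      rw [step, key_identity g lam mu x y, map_add, map_smul]
      have h1 : ((G - (lam * mu) • 1) ^ (k + 1 + l)) ⁅(G - lam • 1) x, g y⁆ = 0 := by
        have hx' : ((G - lam • 1) ^ k) ((G - lam • 1) x) = 0 := by
          rw [← Module.End.mul_apply, ← pow_succ]; exact hx
        have hy' : ((G - mu • 1) ^ (l + 1)) (g y) = 0 := by
          have hcomm : G * (G - mu • 1) = (G - mu • 1) * G := by
            simp [mul_sub, sub_mul, mul_smul_comm, smul_mul_assoc]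
          have : ((G - mu • 1) ^ (l + 1)) (G y) = G (((G - mu • 1) ^ (l + 1)) y) := by
            rw [← Module.End.mul_apply, ← Module.End.mul_apply,
              Commute.pow_left hcomm.symm (l + 1)]
          have hGy : G y = g y := rfl
          rw [← hGy, this, hy, map_zero]
        have hle : k + (l + 1) ≤ n := by omega
        have := ih k (l + 1) hle ((G - lam • 1) x) (g y) hx' hy'
        rwa [show k + (l + 1) = k + 1 + l by ring] at this
      have h2 : ((G - (lam * mu) • 1) ^ (k + 1 + l)) ⁅x, (G - mu • 1) y⁆ = 0 := by
        have hy' : ((G - mu • 1) ^ l) ((G - mu • 1) y) = 0 := by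
          rw [← Module.End.mul_apply, ← pow_succ]; exact hy
        exact ih (k + 1) l (by omega) x ((G - mu • 1) y) hx hy'
      rw [h1, h2, smul_zero, add_zero]

/-- If `x` and `y` lie in the generalized eigenspaces of a Lie algebra automorphism `g` of a
finite-dimensional complex Lie algebra `L`, with eigenvalues `λ` and `μ` respectively, then
`⁅x, y⁆` lies in the generalized eigenspace of `g` with eigenvalue `λ * μ`. -/
theorem bracket_mem_maxGenEigenspace_mul
    (L : Type*) [LieRing L] [LieAlgebra ℂ L] [FiniteDimensional ℂ L]
    (g : L ≃ₗ⁅ℂ⁆ L) (lam mu : ℂ) (x y : L)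
    (hx : x ∈ Module.End.maxGenEigenspace g.toLinearEquiv.toLinearMap lam)
    (hy : y ∈ Module.End.maxGenEigenspace g.toLinearEquiv.toLinearMap mu) :
    ⁅x, y⁆ ∈ Module.End.maxGenEigenspace g.toLinearEquiv.toLinearMap (lam * mu) := by
  rw [Module.End.mem_maxGenEigenspace] at hx hy ⊢
  obtain ⟨k, hk⟩ := hx
  obtain ⟨l, hl⟩ := hy
  exact ⟨k + l, key_aux g lam mu (k + l) k l le_rfl x y hk hl⟩
end

section
/- Let L be a finite-dimensional Lie algebra over ℂ, g a Lie algebra automorphism of L, and s : L → L a ℂ-linear map such that s x = λ • x for every λ ∈ ℂ and every x in the generalized eigenspace of g with eigenvalue λ. Then s preserves the Lie bracket: s ⁅x, y⁆ = ⁅s x, s y⁆ for all x, y ∈ L. -/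
open Module

/-- Key lemma: for a Lie algebra automorphism `g`, brackets of generalized eigenvectors lie in
the generalized eigenspace of the product eigenvalue. -/
lemma bracket_ker_pow {L : Type*} [LieRing L] [LieAlgebra ℂ L]
    (g : L ≃ₗ⁅ℂ⁆ L) (lam mu : ℂ) :
    ∀ (n k m : ℕ), k + m ≤ n → ∀ x y : L,
      ((g.toLinearEquiv.toLinearMap - lam • (1 : End ℂ L)) ^ k) x = 0 →
      ((g.toLinearEquiv.toLinearMap - mu • (1 : End ℂ L)) ^ m) y = 0 →
      ((g.toLinearEquiv.toLinearMap - (lam * mu) • (1 : End ℂ L)) ^ (k + m)) ⁅x, y⁆ = 0 := by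
  set G := g.toLinearEquiv.toLinearMap with hG
  have hGbr : ∀ a b : L, G ⁅a, b⁆ = ⁅G a, G b⁆ := fun a b => g.map_lie a b
  intro n
  induction n with
  | zero =>
    intro k m hkm x y hx hy
    have hk0 : k = 0 := by omega
    have hm0 : m = 0 := by omega
    subst hk0; subst hm0
    simp only [pow_zero, Module.End.one_apply] at hx hy ⊢
    rw [hx, zero_lie]
    exact map_zero _
  | succ n ih =>
    intro k m hkm x y hx hy
    rcases Nat.eq_zero_or_pos k with hk | hk
    · subst hk
      simp only [pow_zero, Module.End.one_apply] at hx
      subst hx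
      simp
    rcases Nat.eq_zero_or_pos m with hm | hm
    · subst hm
      simp only [pow_zero, Module.End.one_apply] at hy
      subst hy
      simp
    obtain ⟨k', rfl⟩ : ∃ k', k = k' + 1 := ⟨k - 1, by omega⟩
    obtain ⟨m', rfl⟩ : ∃ m', m = m' + 1 := ⟨m - 1, by omega⟩
    -- (G - λμ)⁅x,y⁆ = ⁅(G-λ)x, G y⁆ + λ • ⁅x, (G-μ)y⁆
    have step : (G - (lam * mu) • (1 : End ℂ L)) ⁅x, y⁆
        = ⁅(G - lam • (1 : End ℂ L)) x, G y⁆ + lam • ⁅x, (G - mu • (1 : End ℂ L)) y⁆ := by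
      simp only [LinearMap.sub_apply, LinearMap.smul_apply, Module.End.one_apply, hGbr,
        sub_lie, lie_sub, smul_lie, lie_smul, smul_sub, smul_smul]
      abel
    have h1 : ((G - lam • (1 : End ℂ L)) ^ k') ((G - lam • (1 : End ℂ L)) x) = 0 := by
      rw [← Module.End.mul_apply, ← pow_succ] at *
      exact hx
    have h2 : ((G - mu • (1 : End ℂ L)) ^ (m' + 1)) (G y) = 0 := by
      have hc : Commute (G - mu • (1 : End ℂ L)) G := by
        have : Commute G G := Commute.refl G
        simpa using (this.sub_left (Commute.smul_left (Commute.one_left G) mu))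
      rw [← Module.End.mul_apply, (hc.pow_left _).eq, Module.End.mul_apply, hy, map_zero]
    have h3 : ((G - mu • (1 : End ℂ L)) ^ m') ((G - mu • (1 : End ℂ L)) y) = 0 := by
      rw [← Module.End.mul_apply, ← pow_succ] at *
      exact hy
    have e1 := ih k' (m' + 1) (by omega) _ _ h1 h2
    have e2 := ih (k' + 1) m' (by omega) _ _ hx h3
    have : ((G - (lam * mu) • (1 : End ℂ L)) ^ (k' + m' + 1))
        ((G - (lam * mu) • (1 : End ℂ L)) ⁅x, y⁆) = 0 := by
      rw [step, map_add, map_smul]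
      have hk1 : k' + (m' + 1) = k' + m' + 1 := by omega
      have hk2 : k' + 1 + m' = k' + m' + 1 := by omega
      rw [hk1] at e1; rw [hk2] at e2
      rw [e1, e2, smul_zero, add_zero]
    calc ((G - (lam * mu) • (1 : End ℂ L)) ^ (k' + 1 + (m' + 1))) ⁅x, y⁆
        = ((G - (lam * mu) • (1 : End ℂ L)) ^ (k' + m' + 1))
            ((G - (lam * mu) • (1 : End ℂ L)) ⁅x, y⁆) := by
          rw [← Module.End.mul_apply, ← pow_succ]
          congr 2
          omega
      _ = 0 := this

lemma bracket_mem_maxGenEigenspace {L : Type*} [LieRing L] [LieAlgebra ℂ L]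
    (g : L ≃ₗ⁅ℂ⁆ L) (lam mu : ℂ) {x y : L}
    (hx : x ∈ End.maxGenEigenspace g.toLinearEquiv.toLinearMap lam)
    (hy : y ∈ End.maxGenEigenspace g.toLinearEquiv.toLinearMap mu) :
    ⁅x, y⁆ ∈ End.maxGenEigenspace g.toLinearEquiv.toLinearMap (lam * mu) := by
  rw [End.mem_maxGenEigenspace] at hx hy ⊢
  obtain ⟨k, hk⟩ := hx
  obtain ⟨m, hm⟩ := hy
  exact ⟨k + m, bracket_ker_pow g lam mu (k + m) k m le_rfl x y hk hm⟩

/-- If `s` is a linear map acting as the scalar `λ` on each generalized eigenspace of a Lie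
algebra automorphism `g` of a finite-dimensional complex Lie algebra (the semisimple part of
`g`), then `s` preserves the Lie bracket. -/
theorem semisimplePart_preserves_bracket
    (L : Type*) [LieRing L] [LieAlgebra ℂ L] [FiniteDimensional ℂ L]
    (g : L ≃ₗ⁅ℂ⁆ L) (s : L →ₗ[ℂ] L)
    (hs : ∀ (lam : ℂ) (x : L),
      x ∈ Module.End.maxGenEigenspace g.toLinearEquiv.toLinearMap lam → s x = lam • x)
    (x y : L) : s ⁅x, y⁆ = ⁅s x, s y⁆ := by
  set G := g.toLinearEquiv.toLinearMap with hG
  have key : ∀ lam mu (a b : L), a ∈ End.maxGenEigenspace G lam →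
      b ∈ End.maxGenEigenspace G mu → s ⁅a, b⁆ = ⁅s a, s b⁆ := by
    intro lam mu a b ha hb
    rw [hs lam a ha, hs mu b hb, hs (lam * mu) ⁅a, b⁆ (bracket_mem_maxGenEigenspace g lam mu ha hb),
      smul_lie, lie_smul, smul_smul]
  have htop : (⨆ lam : ℂ, End.maxGenEigenspace G lam) = ⊤ := by
    simpa [End.maxGenEigenspace] using End.iSup_maxGenEigenspace_eq_top G
  -- first: fix a in some eigenspace, induct over b
  have step1 : ∀ lam (a : L), a ∈ End.maxGenEigenspace G lam →
      ∀ b : L, s ⁅a, b⁆ = ⁅s a, s b⁆ := by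
    intro lam a ha b
    have hb : b ∈ (⨆ mu : ℂ, End.maxGenEigenspace G mu) := htop ▸ Submodule.mem_top
    induction hb using Submodule.iSup_induction' with
    | mem mu c hc => exact key lam mu a c ha hc
    | zero => simp
    | add c d _ _ hc hd => simp only [lie_add, map_add, hc, hd]
  have hx' : x ∈ (⨆ lam : ℂ, End.maxGenEigenspace G lam) := htop ▸ Submodule.mem_top
  induction hx' using Submodule.iSup_induction' with
  | mem lam a ha => exact step1 lam a ha y
  | zero => simp
  | add a b _ _ hab hbb => simp only [add_lie, map_add, hab, hbb]
end

section
/- Let L be a finite-dimensional Lie algebra over ℂ, g a Lie algebra automorphism of L, and s : L ≃ L a ℂ-linear equivalence such that s x = λ • x for every λ ∈ ℂ and every x in the generalized eigenspace of g with eigenvalue λ. Then the composite u = s⁻¹ ∘ g (the unipotent part of g) preserves the Lie bracket: u ⁅x, y⁆ = ⁅u x, u y⁆ for all x, y ∈ L. -/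
open Module

private lemma genEig_bracket_aux
    {L : Type*} [LieRing L] [LieAlgebra ℂ L]
    (g : L ≃ₗ⁅ℂ⁆ L) (lam mu : ℂ) :
    ∀ (n k l : ℕ), k + l ≤ n → ∀ a b : L,
      ((g.toLinearEquiv.toLinearMap - lam • 1) ^ k) a = 0 →
      ((g.toLinearEquiv.toLinearMap - mu • 1) ^ l) b = 0 →
      ((g.toLinearEquiv.toLinearMap - (lam * mu) • 1) ^ n) ⁅a, b⁆ = 0 := by
  set f : Module.End ℂ L := g.toLinearEquiv.toLinearMap with hf
  have hfl : ∀ a b : L, f ⁅a, b⁆ = ⁅f a, f b⁆ := fun a b => g.map_lie a b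
  intro n
  induction n with
  | zero =>
    intro k l hkl a b ha hb
    have hk0 : k = 0 := by omega
    subst hk0
    simp only [pow_zero, Module.End.one_apply] at ha
    simp [ha]
  | succ n ih =>
    intro k l hkl a b ha hb
    rcases Nat.eq_zero_or_pos k with hk | hk
    · subst hk
      simp only [pow_zero, Module.End.one_apply] at ha
      simp [ha]
    rcases Nat.eq_zero_or_pos l with hl | hl
    · subst hl
      simp only [pow_zero, Module.End.one_apply] at hb
      simp [hb]
    have key : (f - (lam * mu) • 1) ⁅a, b⁆
        = ⁅(f - lam • 1) a, f b⁆ + lam • ⁅a, (f - mu • 1) b⁆ := by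
      simp only [LinearMap.sub_apply, LinearMap.smul_apply, Module.End.one_apply,
        hfl, sub_lie, lie_sub, smul_lie, lie_smul, smul_smul, smul_sub]
      abel
    obtain ⟨k, rfl⟩ : ∃ k', k = k' + 1 := ⟨k - 1, by omega⟩
    obtain ⟨l, rfl⟩ : ∃ l', l = l' + 1 := ⟨l - 1, by omega⟩
    have step1 : ((f - (lam * mu) • 1) ^ n) ⁅(f - lam • 1) a, f b⁆ = 0 := by
      apply ih k (l + 1) (by omega)
      · have : ((f - lam • 1) ^ k) ((f - lam • 1) a)
            = ((f - lam • 1) ^ (k + 1)) a := by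
          rw [← Module.End.mul_apply, ← pow_succ]
        rw [this, ha]
      · have hc : Commute ((f - mu • 1) ^ (l + 1)) f :=
          Commute.pow_left ((Commute.refl f).sub_left ((Commute.one_left f).smul_left mu)) (l + 1)
        calc ((f - mu • 1) ^ (l + 1)) (f b) = f (((f - mu • 1) ^ (l + 1)) b) := by
              rw [← Module.End.mul_apply, hc.eq, Module.End.mul_apply]
          _ = 0 := by rw [hb, map_zero]
    have step2 : ((f - (lam * mu) • 1) ^ n) ⁅a, (f - mu • 1) b⁆ = 0 := by
      apply ih (k + 1) l (by omega) a _ ha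
      rw [← Module.End.mul_apply, ← pow_succ, hb]
    calc ((f - (lam * mu) • 1) ^ (n + 1)) ⁅a, b⁆
        = ((f - (lam * mu) • 1) ^ n) ((f - (lam * mu) • 1) ⁅a, b⁆) := by
          rw [pow_succ, Module.End.mul_apply]
      _ = 0 := by
          rw [key, map_add, map_smul, step1, step2, smul_zero, add_zero]

private lemma genEig_bracket
    {L : Type*} [LieRing L] [LieAlgebra ℂ L]
    (g : L ≃ₗ⁅ℂ⁆ L) (lam mu : ℂ) {a b : L}
    (ha : a ∈ Module.End.maxGenEigenspace g.toLinearEquiv.toLinearMap lam)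
    (hb : b ∈ Module.End.maxGenEigenspace g.toLinearEquiv.toLinearMap mu) :
    ⁅a, b⁆ ∈ Module.End.maxGenEigenspace g.toLinearEquiv.toLinearMap (lam * mu) := by
  rw [Module.End.mem_maxGenEigenspace] at ha hb ⊢
  obtain ⟨k, hk⟩ := ha
  obtain ⟨l, hl⟩ := hb
  exact ⟨k + l, genEig_bracket_aux g lam mu (k + l) k l le_rfl a b hk hl⟩

/-- If `s` is a linear equivalence acting as the scalar `λ` on each generalized eigenspace of a
Lie algebra automorphism `g` of a finite-dimensional complex Lie algebra (the semisimple part of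
`g`), then the unipotent part `u = s⁻¹ ∘ g` of `g` preserves the Lie bracket. -/
theorem unipotentPart_preserves_bracket
    (L : Type*) [LieRing L] [LieAlgebra ℂ L] [FiniteDimensional ℂ L]
    (g : L ≃ₗ⁅ℂ⁆ L) (s : L ≃ₗ[ℂ] L)
    (hs : ∀ (lam : ℂ) (x : L),
      x ∈ Module.End.maxGenEigenspace g.toLinearEquiv.toLinearMap lam → s x = lam • x)
    (x y : L) : s.symm (g ⁅x, y⁆) = ⁅s.symm (g x), s.symm (g y)⁆ := by
  set f : Module.End ℂ L := g.toLinearEquiv.toLinearMap with hf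
  -- s preserves bracket
  have hsbr : ∀ a b : L, s ⁅a, b⁆ = ⁅s a, s b⁆ := by
    have htop : ∀ z : L, z ∈ ⨆ lam : ℂ, f.maxGenEigenspace lam := by
      intro z
      rw [Module.End.iSup_maxGenEigenspace_eq_top]
      trivial
    intro a b
    induction htop a using Submodule.iSup_induction' with
    | mem lam a ha =>
      induction htop b using Submodule.iSup_induction' with
      | mem mu b hb =>
        rw [hs lam a ha, hs mu b hb, hs (lam * mu) ⁅a, b⁆ (genEig_bracket g lam mu ha hb),
          smul_lie, lie_smul, smul_smul]
      | zero => simp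
      | add b c _ _ hb hc => rw [lie_add, map_add, hb, hc, map_add, lie_add]
    | zero => simp
    | add a c _ _ ha hc => rw [add_lie, map_add, ha, hc, map_add, add_lie]
  have hsymm : ∀ a b : L, s.symm ⁅a, b⁆ = ⁅s.symm a, s.symm b⁆ := by
    intro a b
    apply s.injective
    rw [s.apply_symm_apply, hsbr, s.apply_symm_apply, s.apply_symm_apply]
  rw [g.map_lie, hsymm]
end

section
/- Let L be a Lie algebra over ℂ and N : L → L a nilpotent ℂ-linear map such that the exponential exp N = ∑_{k≥0} N^k / k! (a finite sum, since N is nilpotent) preserves the Lie bracket, i.e. (exp N) ⁅x, y⁆ = ⁅(exp N) x, (exp N) y⁆ for all x, y ∈ L. Then N is a derivation of L: N ⁅x, y⁆ = ⁅N x, y⁆ + ⁅x, N y⁆ for all x, y ∈ L. -/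
open Finset

section ExpRing
variable {R : Type*} [Ring R] [Algebra ℂ R]

noncomputable def nexp (m : ℕ) (a : R) : R :=
  ∑ i ∈ Finset.range m, ((i.factorial : ℂ)⁻¹) • a ^ i

lemma pow_zero_of_le {a : R} {k m : ℕ} (hk : a ^ k = 0) (hkm : k ≤ m) : a ^ m = 0 := by
  obtain ⟨j, rfl⟩ := Nat.exists_eq_add_of_le hkm
  rw [pow_add, hk, zero_mul]

lemma nexp_pad {a : R} {k m : ℕ} (hk : a ^ k = 0) (hkm : k ≤ m) : nexp m a = nexp k a := by
  rw [nexp, nexp]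
  refine (Finset.sum_subset (Finset.range_subset_range.2 hkm) ?_).symm
  intro i _ hi
  rw [Finset.mem_range, not_lt] at hi
  rw [pow_zero_of_le hk hi, smul_zero]

lemma add_pow_zero {a b : R} (h : Commute a b) {p q : ℕ} (ha : a ^ p = 0) (hb : b ^ q = 0) :
    (a + b) ^ (p + q) = 0 := by
  rw [h.add_pow']
  refine Finset.sum_eq_zero fun x hx => ?_
  rw [Finset.HasAntidiagonal.mem_antidiagonal] at hx
  rcases le_or_gt p x.1 with h1 | h1
  · rw [pow_zero_of_le ha h1, zero_mul, smul_zero]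
  · rw [pow_zero_of_le hb (by omega), mul_zero, smul_zero]

lemma nexp_mul {a b : R} (h : Commute a b) {ka kb : ℕ} (ha : a ^ ka = 0) (hb : b ^ kb = 0) :
    nexp (ka + kb) a * nexp (ka + kb) b = nexp (ka + kb) (a + b) := by
  set m := ka + kb with hm
  set g : ℕ × ℕ → R := fun p => ((p.1.factorial : ℂ)⁻¹ * (p.2.factorial : ℂ)⁻¹) • (a ^ p.1 * b ^ p.2)
    with hg
  have step1 : nexp m a * nexp m b = ∑ p ∈ Finset.range m ×ˢ Finset.range m, g p := by
    rw [nexp, nexp, Finset.sum_mul_sum, Finset.sum_product]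
    refine Finset.sum_congr rfl fun i _ => Finset.sum_congr rfl fun j _ => ?_
    rw [hg, smul_mul_smul_comm]
  have step2 : nexp m (a + b) = ∑ t ∈ Finset.range m, ∑ p ∈ Finset.HasAntidiagonal.antidiagonal t, g p := by
    rw [nexp]
    refine Finset.sum_congr rfl fun t _ => ?_
    rw [h.add_pow', Finset.smul_sum]
    refine Finset.sum_congr rfl fun p hp => ?_
    rw [Finset.HasAntidiagonal.mem_antidiagonal] at hp
    rw [hg]
    have h1 : p.1 ≤ t := by omega
    have hfac : (t.choose p.1 : ℂ) * p.1.factorial * p.2.factorial = t.factorial := by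
      have := Nat.choose_mul_factorial_mul_factorial h1
      rw [show t - p.1 = p.2 by omega] at this
      exact_mod_cast congrArg (Nat.cast : ℕ → ℂ) this
    have hne1 : (p.1.factorial : ℂ) ≠ 0 := Nat.cast_ne_zero.2 p.1.factorial_ne_zero
    have hne2 : (p.2.factorial : ℂ) ≠ 0 := Nat.cast_ne_zero.2 p.2.factorial_ne_zero
    have hne3 : (t.factorial : ℂ) ≠ 0 := Nat.cast_ne_zero.2 t.factorial_ne_zero
    rw [← Nat.cast_smul_eq_nsmul ℂ, smul_smul]
    congr 1
    field_simp
    linear_combination hfac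
  have step3 : ∑ t ∈ Finset.range m, ∑ p ∈ Finset.HasAntidiagonal.antidiagonal t, g p
      = ∑ p ∈ Finset.range m ×ˢ Finset.range m, g p := by
    rw [← Finset.sum_biUnion]
    · refine Finset.sum_subset ?_ ?_
      · intro p hp
        simp only [Finset.mem_biUnion, Finset.HasAntidiagonal.mem_antidiagonal, Finset.mem_range] at hp
        obtain ⟨t, ht, hpt⟩ := hp
        simp only [Finset.mem_product, Finset.mem_range]
        omega
      · intro p hp hnp
        simp only [Finset.mem_product, Finset.mem_range] at hp
        simp only [Finset.mem_biUnion, Finset.HasAntidiagonal.mem_antidiagonal, Finset.mem_range] at hnp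
        have hge : m ≤ p.1 + p.2 := by
          by_contra hc
          exact hnp ⟨p.1 + p.2, by omega, rfl⟩
        simp only [hg]
        rcases le_or_gt ka p.1 with h1 | h1
        · rw [pow_zero_of_le ha h1, zero_mul, smul_zero]
        · rw [pow_zero_of_le hb (by omega), mul_zero, smul_zero]
    · intro s _ t _ hst
      simp only [Function.onFun, Finset.disjoint_left, Finset.HasAntidiagonal.mem_antidiagonal]
      intro p hps hpt
      exact hst (hps ▸ hpt)
  rw [step1, step2, step3]

lemma nexp_zero_elem {m : ℕ} (hm : 1 ≤ m) : nexp m (0 : R) = 1 := by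
  rw [nexp]
  rw [Finset.sum_eq_single_of_mem 0 (Finset.mem_range.2 hm)
    (fun i _ hi => by rw [zero_pow hi, smul_zero])]
  simp

lemma nexp_commute {a b : R} (h : Commute a b) (m : ℕ) : Commute (nexp m a) (nexp m b) :=
  Commute.sum_left _ _ _ fun i _ =>
    Commute.sum_right _ _ _ fun j _ => ((h.pow_pow i j).smul_left _).smul_right _

end ExpRing

section Contract
variable {V : Type*} [AddCommGroup V] [Module ℂ V]

lemma nexp_fix_contract (d : Module.End ℂ V) (v : V) (n : ℕ)
    (hd : d ^ (n + 2) = 0) (h : nexp (n + 2) d v = v) : d v = 0 := by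
  set p : Module.End ℂ V := ∑ i ∈ Finset.range n, (((i + 2).factorial : ℂ)⁻¹) • d ^ i with hp
  have hdp : Commute d p :=
    Commute.sum_right _ _ _ fun i _ => ((Commute.refl d).pow_right i).smul_right _
  have hE : nexp (n + 2) d = 1 + d + d * p * d := by
    rw [nexp, Finset.sum_range_succ', Finset.sum_range_succ']
    have h0 : ((Nat.factorial 0 : ℂ)⁻¹) • d ^ 0 = 1 := by simp
    have h1 : ((Nat.factorial (0 + 1) : ℂ)⁻¹) • d ^ (0 + 1) = d := by simp
    rw [h0, h1]
    have : ∑ i ∈ Finset.range n, ((Nat.factorial (i + 1 + 1) : ℂ)⁻¹) • d ^ (i + 1 + 1)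
        = d * p * d := by
      rw [hp, Finset.mul_sum, Finset.sum_mul]
      refine Finset.sum_congr rfl fun i _ => ?_
      rw [mul_smul_comm, smul_mul_assoc]
      congr 1
      rw [pow_succ, pow_succ']
    rw [this]
    abel
  rw [hE] at h
  simp only [LinearMap.add_apply, Module.End.one_apply, Module.End.mul_apply] at h
  have h3 : d v + d (p (d v)) = 0 := by
    have h4 : v + (d v + d (p (d v))) = v := by
      rw [← add_assoc]
      exact h
    simpa using congrArg (fun w => w - v) h4
  have key : d v = (-(d * p)) (d v) := by
    rw [LinearMap.neg_apply, Module.End.mul_apply, eq_neg_iff_add_eq_zero]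
    exact h3
  have iter : ∀ j, d v = ((-(d * p)) ^ j) (d v) := by
    intro j
    induction j with
    | zero => simp
    | succ j ih =>
      rw [pow_succ', Module.End.mul_apply, ← ih, ← key]
  have hu : (-(d * p)) ^ (n + 2) = 0 := by
    rw [neg_eq_neg_one_mul, (Commute.neg_one_left (d * p)).mul_pow, hdp.mul_pow, hd]
    simp
  rw [iter (n + 2), hu]
  simp

end Contract

instance endHasDistribNeg {V : Type*} [AddCommGroup V] [Module ℂ V] :
    HasDistribNeg (Module.End ℂ V) :=
  NonUnitalNonAssocRing.toHasDistribNeg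

section Ops
variable {L : Type*} [LieRing L] [LieAlgebra ℂ L]

/-- The Lie bracket as a bilinear map. -/
noncomputable def brkt : L →ₗ[ℂ] L →ₗ[ℂ] L where
  toFun x :=
    { toFun := fun y => ⁅x, y⁆
      map_add' := lie_add x
      map_smul' := fun c y => lie_smul c x y }
  map_add' x z := by ext y; simp [add_lie]
  map_smul' c x := by ext y; simp [smul_lie]

@[simp] lemma brkt_apply (x y : L) : brkt x y = ⁅x, y⁆ := rfl

variable (N : Module.End ℂ L)

noncomputable def opA : Module.End ℂ (L →ₗ[ℂ] L →ₗ[ℂ] L) :=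
  LinearMap.llcomp ℂ L (L →ₗ[ℂ] L) (L →ₗ[ℂ] L) (LinearMap.llcomp ℂ L L L N)

noncomputable def opB : Module.End ℂ (L →ₗ[ℂ] L →ₗ[ℂ] L) :=
  LinearMap.lcomp ℂ (L →ₗ[ℂ] L) N

noncomputable def opC : Module.End ℂ (L →ₗ[ℂ] L →ₗ[ℂ] L) :=
  LinearMap.llcomp ℂ L (L →ₗ[ℂ] L) (L →ₗ[ℂ] L) (LinearMap.lcomp ℂ L N)

@[simp] lemma opA_apply (φ : L →ₗ[ℂ] L →ₗ[ℂ] L) (x y : L) : opA N φ x y = N (φ x y) := rfl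
@[simp] lemma opB_apply (φ : L →ₗ[ℂ] L →ₗ[ℂ] L) (x y : L) : opB N φ x y = φ (N x) y := rfl
@[simp] lemma opC_apply (φ : L →ₗ[ℂ] L →ₗ[ℂ] L) (x y : L) : opC N φ x y = φ x (N y) := rfl

lemma opA_pow_apply (i : ℕ) (φ : L →ₗ[ℂ] L →ₗ[ℂ] L) (x y : L) :
    ((opA N) ^ i) φ x y = (N ^ i) (φ x y) := by
  induction i with
  | zero => rfl
  | succ i ih => rw [pow_succ', pow_succ', Module.End.mul_apply, Module.End.mul_apply, opA_apply, ih]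

lemma opB_pow_apply (i : ℕ) (φ : L →ₗ[ℂ] L →ₗ[ℂ] L) (x y : L) :
    ((opB N) ^ i) φ x y = φ ((N ^ i) x) y := by
  induction i generalizing φ with
  | zero => rfl
  | succ i ih =>
    rw [pow_succ, Module.End.mul_apply, ih, opB_apply, ← Module.End.mul_apply, ← pow_succ']

lemma opC_pow_apply (i : ℕ) (φ : L →ₗ[ℂ] L →ₗ[ℂ] L) (x y : L) :
    ((opC N) ^ i) φ x y = φ x ((N ^ i) y) := by
  induction i generalizing φ with
  | zero => rfl
  | succ i ih =>
    rw [pow_succ, Module.End.mul_apply, ih]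
    simp [Module.End.mul_apply, pow_succ']

lemma commAB : Commute (opA N) (opB N) := by
  ext φ x y
  rfl

lemma commAC : Commute (opA N) (opC N) := by
  ext φ x y
  rfl

lemma commBC : Commute (opB N) (opC N) := by
  ext φ x y
  rfl

end Ops

open Finset in
/-- If `N` is a nilpotent linear endomorphism of a complex Lie algebra `L` whose exponential
`exp N = ∑_{i < k} N^i / i!` (a finite sum, `N ^ k = 0`) preserves the Lie bracket, then `N` is
a derivation of `L`. -/
theorem nilpotent_exp_automorphism_is_derivation
    (L : Type*) [LieRing L] [LieAlgebra ℂ L] (N : Module.End ℂ L)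
    (k : ℕ) (hk : N ^ k = 0)
    (hexp : ∀ x y : L,
      (∑ i ∈ Finset.range k, ((i.factorial : ℂ)⁻¹) • N ^ i) ⁅x, y⁆ =
        ⁅(∑ i ∈ Finset.range k, ((i.factorial : ℂ)⁻¹) • N ^ i) x,
          (∑ i ∈ Finset.range k, ((i.factorial : ℂ)⁻¹) • N ^ i) y⁆)
    (x y : L) : N ⁅x, y⁆ = ⁅N x, y⁆ + ⁅x, N y⁆ := by
  rcases Nat.eq_zero_or_pos k with hk0 | hkpos
  · subst hk0
    rw [pow_zero] at hk
    have hz : ∀ z : L, z = 0 := fun z => by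
      have := LinearMap.ext_iff.1 hk z
      simpa using this
    rw [hz (N ⁅x, y⁆), hz ⁅N x, y⁆, hz ⁅x, N y⁆, add_zero]
  set A := opA N with hA
  set B := opB N with hB
  set C := opC N with hC
  have hAk : A ^ k = 0 := by
    ext φ x y
    simp [hA, opA_pow_apply, hk]
  have hBk : B ^ k = 0 := by
    ext φ x y
    simp [hB, opB_pow_apply, hk]
  have hCk : C ^ k = 0 := by
    ext φ x y
    simp [hC, opC_pow_apply, hk]
  have hneg : ∀ T : Module.End ℂ (L →ₗ[ℂ] L →ₗ[ℂ] L), T ^ k = 0 → (-T) ^ k = 0 := by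
    intro T hT
    have h1 : (-T) = (-1 : Module.End ℂ (L →ₗ[ℂ] L →ₗ[ℂ] L)) * T := by
      ext φ
      simp
    rw [h1, (Commute.neg_one_left T).mul_pow, hT, mul_zero]
  have hnB : (-B) ^ k = 0 := hneg B hBk
  have hnC : (-C) ^ k = 0 := hneg C hCk
  have cAB := commAB N
  have cAC := commAC N
  have cBC := commBC N
  -- the hypothesis, at the level of bilinear maps
  have hM : nexp k A (brkt (L := L)) = (nexp k B * nexp k C) (brkt (L := L)) := by
    ext x y
    have h := hexp x y
    rw [show (⁅(∑ i ∈ Finset.range k, ((i.factorial : ℂ)⁻¹) • N ^ i) x,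
        (∑ i ∈ Finset.range k, ((i.factorial : ℂ)⁻¹) • N ^ i) y⁆ : L)
        = brkt ((∑ i ∈ Finset.range k, ((i.factorial : ℂ)⁻¹) • N ^ i) x)
          ((∑ i ∈ Finset.range k, ((i.factorial : ℂ)⁻¹) • N ^ i) y) from rfl] at h
    simp only [nexp, LinearMap.sum_apply, LinearMap.smul_apply, Module.End.mul_apply,
      hA, hB, hC, opA_pow_apply, opB_pow_apply, opC_pow_apply, brkt_apply, map_sum,
      map_smul] at h ⊢
    simpa using h
  set m4 := k + k + (k + k) with hm4
  have hkk : k ≤ k + k := Nat.le_add_right k k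
  have hkm4 : k ≤ m4 := by omega
  have hkkm4 : k + k ≤ m4 := by omega
  have e1 : nexp (k + k) A * nexp (k + k) (-B) = nexp (k + k) (A + -B) := by
    have h0 := nexp_mul (R := Module.End ℂ (L →ₗ[ℂ] L →ₗ[ℂ] L)) cAB.neg_right hAk hnB
    exact h0
  have hABk : (A + -B) ^ (k + k) = 0 := by
    have h0 := add_pow_zero (R := Module.End ℂ (L →ₗ[ℂ] L →ₗ[ℂ] L)) cAB.neg_right hAk hnB
    exact h0
  have cABC : Commute (A + -B) (-C) := by
    have h0 := Commute.add_left cAC.neg_right ((cBC.neg_right).neg_left)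
    exact h0
  have e2 : nexp m4 (A + -B) * nexp m4 (-C) = nexp m4 (A + -B + -C) := by
    have h0 := nexp_mul (R := Module.End ℂ (L →ₗ[ℂ] L →ₗ[ℂ] L)) cABC hABk (pow_zero_of_le (R := Module.End ℂ (L →ₗ[ℂ] L →ₗ[ℂ] L)) hnC hkk)
    exact h0
  have hDk : (A + -B + -C) ^ m4 = 0 := by
    have h0 := add_pow_zero (R := Module.End ℂ (L →ₗ[ℂ] L →ₗ[ℂ] L)) cABC hABk (pow_zero_of_le (R := Module.End ℂ (L →ₗ[ℂ] L →ₗ[ℂ] L)) hnC hkk)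
    exact h0
  have pd1 : nexp m4 (A + -B) = nexp m4 A * nexp m4 (-B) := by
    rw [nexp_pad (R := Module.End ℂ (L →ₗ[ℂ] L →ₗ[ℂ] L)) hABk hkkm4, ← e1, nexp_pad (R := Module.End ℂ (L →ₗ[ℂ] L →ₗ[ℂ] L)) hAk hkm4, nexp_pad (R := Module.End ℂ (L →ₗ[ℂ] L →ₗ[ℂ] L)) hAk hkk,
      nexp_pad (R := Module.End ℂ (L →ₗ[ℂ] L →ₗ[ℂ] L)) hnB hkm4, nexp_pad (R := Module.End ℂ (L →ₗ[ℂ] L →ₗ[ℂ] L)) hnB hkk]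
  have hQQ : nexp m4 (-B) * nexp m4 B = 1 := by
    have h0 := nexp_mul (R := Module.End ℂ (L →ₗ[ℂ] L →ₗ[ℂ] L)) ((Commute.refl B).neg_left) hnB hBk
    have h1 : nexp (k + k) (-B) * nexp (k + k) B = nexp (k + k) (-B + B) := h0
    have hbb : (-B : Module.End ℂ (L →ₗ[ℂ] L →ₗ[ℂ] L)) + B = 0 := neg_add_cancel B
    rw [hbb] at h1
    rw [nexp_pad (R := Module.End ℂ (L →ₗ[ℂ] L →ₗ[ℂ] L)) hnB hkm4, nexp_pad (R := Module.End ℂ (L →ₗ[ℂ] L →ₗ[ℂ] L)) hBk hkm4, ← nexp_pad (R := Module.End ℂ (L →ₗ[ℂ] L →ₗ[ℂ] L)) hnB hkk, ← nexp_pad (R := Module.End ℂ (L →ₗ[ℂ] L →ₗ[ℂ] L)) hBk hkk,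
      h1, nexp_zero_elem (R := Module.End ℂ (L →ₗ[ℂ] L →ₗ[ℂ] L)) (by omega)]
  have hRR : nexp m4 (-C) * nexp m4 C = 1 := by
    have h0 := nexp_mul (R := Module.End ℂ (L →ₗ[ℂ] L →ₗ[ℂ] L)) ((Commute.refl C).neg_left) hnC hCk
    have h1 : nexp (k + k) (-C) * nexp (k + k) C = nexp (k + k) (-C + C) := h0
    have hcc : (-C : Module.End ℂ (L →ₗ[ℂ] L →ₗ[ℂ] L)) + C = 0 := neg_add_cancel C
    rw [hcc] at h1
    rw [nexp_pad (R := Module.End ℂ (L →ₗ[ℂ] L →ₗ[ℂ] L)) hnC hkm4, nexp_pad (R := Module.End ℂ (L →ₗ[ℂ] L →ₗ[ℂ] L)) hCk hkm4, ← nexp_pad (R := Module.End ℂ (L →ₗ[ℂ] L →ₗ[ℂ] L)) hnC hkk, ← nexp_pad (R := Module.End ℂ (L →ₗ[ℂ] L →ₗ[ℂ] L)) hCk hkk,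
      h1, nexp_zero_elem (R := Module.End ℂ (L →ₗ[ℂ] L →ₗ[ℂ] L)) (by omega)]
  have hPb : nexp m4 A (brkt (L := L)) = (nexp m4 B * nexp m4 C) (brkt (L := L)) := by
    rw [nexp_pad (R := Module.End ℂ (L →ₗ[ℂ] L →ₗ[ℂ] L)) hAk hkm4, nexp_pad (R := Module.End ℂ (L →ₗ[ℂ] L →ₗ[ℂ] L)) hBk hkm4, nexp_pad (R := Module.End ℂ (L →ₗ[ℂ] L →ₗ[ℂ] L)) hCk hkm4]
    exact hM
  have cPQ' : Commute (nexp m4 A) (nexp m4 (-B)) := by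
    have h0 := nexp_commute (R := Module.End ℂ (L →ₗ[ℂ] L →ₗ[ℂ] L)) cAB.neg_right m4
    exact h0
  have cPR' : Commute (nexp m4 A) (nexp m4 (-C)) := by
    have h0 := nexp_commute (R := Module.End ℂ (L →ₗ[ℂ] L →ₗ[ℂ] L)) cAC.neg_right m4
    exact h0
  have cQR' : Commute (nexp m4 B) (nexp m4 (-C)) := by
    have h0 := nexp_commute (R := Module.End ℂ (L →ₗ[ℂ] L →ₗ[ℂ] L)) cBC.neg_right m4
    exact h0
  have hfix : nexp m4 (A + -B + -C) (brkt (L := L)) = brkt (L := L) := by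
    rw [← e2, pd1]
    have hrear : nexp m4 A * nexp m4 (-B) * nexp m4 (-C)
        = nexp m4 (-B) * nexp m4 (-C) * nexp m4 A := by
      calc nexp m4 A * nexp m4 (-B) * nexp m4 (-C)
          = nexp m4 (-B) * nexp m4 A * nexp m4 (-C) := by rw [cPQ'.eq]
        _ = nexp m4 (-B) * (nexp m4 (-C) * nexp m4 A) := by rw [mul_assoc, cPR'.eq]
        _ = nexp m4 (-B) * nexp m4 (-C) * nexp m4 A := by rw [← mul_assoc]
    rw [hrear, Module.End.mul_apply, hPb, ← Module.End.mul_apply, ← mul_assoc]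
    have hcollapse : nexp m4 (-B) * nexp m4 (-C) * nexp m4 B * nexp m4 C = 1 := by
      calc nexp m4 (-B) * nexp m4 (-C) * nexp m4 B * nexp m4 C
          = nexp m4 (-B) * (nexp m4 (-C) * nexp m4 B) * nexp m4 C := by rw [mul_assoc (nexp m4 (-B))]
        _ = nexp m4 (-B) * (nexp m4 B * nexp m4 (-C)) * nexp m4 C := by rw [cQR'.symm.eq]
        _ = nexp m4 (-B) * nexp m4 B * (nexp m4 (-C) * nexp m4 C) := by
            rw [← mul_assoc, mul_assoc (nexp m4 (-B) * nexp m4 B)]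
        _ = 1 := by rw [hQQ, hRR, one_mul]
    rw [hcollapse, Module.End.one_apply]
  obtain ⟨n, hn⟩ : ∃ n, m4 = n + 2 := ⟨m4 - 2, by omega⟩
  rw [hn] at hDk hfix
  have hDv : (A + -B + -C) (brkt (L := L)) = 0 :=
    nexp_fix_contract _ _ n hDk hfix
  have h2 := congrArg (fun f : L →ₗ[ℂ] L →ₗ[ℂ] L => f x y) hDv
  have h3 : N ⁅x, y⁆ + -⁅N x, y⁆ + -⁅x, N y⁆ = 0 := h2
  have h4 : N ⁅x, y⁆ - (⁅N x, y⁆ + ⁅x, N y⁆) = 0 := by rw [← h3]; abel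
  exact sub_eq_zero.1 h4
end

section
/- Let V be a finite-dimensional vector space over ℂ, B a symmetric bilinear form on V, and g : V ≃ V a linear automorphism preserving B, i.e. B(g x, g y) = B(x, y) for all x, y ∈ V. Let λ, μ ∈ ℂ with λ·μ ≠ 1. If x belongs to the generalized eigenspace of g with eigenvalue λ and y belongs to the generalized eigenspace of g with eigenvalue μ, then B(x, y) = 0. -/
/-- If a linear automorphism `g` of a finite-dimensional complex vector space preserves a
symmetric bilinear form `B`, and `λ * μ ≠ 1`, then the generalized eigenspaces of `g` with
eigenvalues `λ` and `μ` are orthogonal with respect to `B`. -/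
theorem maxGenEigenspace_orthogonal_of_mul_ne_one
    (V : Type*) [AddCommGroup V] [Module ℂ V] [FiniteDimensional ℂ V]
    (B : V →ₗ[ℂ] V →ₗ[ℂ] ℂ) (hBsymm : ∀ x y : V, B x y = B y x)
    (g : V ≃ₗ[ℂ] V) (hBg : ∀ x y : V, B (g x) (g y) = B x y)
    (lam mu : ℂ) (hlm : lam * mu ≠ 1) (x y : V)
    (hx : x ∈ Module.End.maxGenEigenspace g.toLinearMap lam)
    (hy : y ∈ Module.End.maxGenEigenspace g.toLinearMap mu) :
    B x y = 0 := by
  set f : Module.End ℂ V := g.toLinearMap with hf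
  obtain ⟨k, hk⟩ := (Module.End.mem_maxGenEigenspace _ _ _).mp hx
  obtain ⟨l, hl⟩ := (Module.End.mem_maxGenEigenspace _ _ _).mp hy
  clear hx hy
  have key : ∀ n k l (x y : V), k + l ≤ n →
      (((f - lam • 1) ^ k : Module.End ℂ V)) x = 0 → (((f - mu • 1) ^ l : Module.End ℂ V)) y = 0 → B x y = 0 := by
    intro n
    induction n with
    | zero =>
      intro k l x y hn hkx hly
      have hk0 : k = 0 := by omega
      subst hk0
      simp only [pow_zero, Module.End.one_apply] at hkx
      subst hkx
      simp
    | succ n ih =>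
      intro k l x y hn hkx hly
      match k, l with
      | 0, l =>
        simp only [pow_zero, Module.End.one_apply] at hkx
        subst hkx; simp
      | k+1, 0 =>
        simp only [pow_zero, Module.End.one_apply] at hly
        subst hly; simp
      | k+1, l+1 =>
        set x' := f x - lam • x with hx'
        set y' := f y - mu • y with hy'
        have hkx' : ((f - lam • 1) ^ k) x' = 0 := by
          rw [pow_succ] at hkx
          simpa [hx', Module.End.mul_apply, LinearMap.sub_apply] using hkx
        have hly' : ((f - mu • 1) ^ l) y' = 0 := by
          rw [pow_succ] at hly
          simpa [hy', Module.End.mul_apply, LinearMap.sub_apply] using hly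
        have h1 : B x y' = 0 := ih (k+1) l x y' (by omega) hkx hly'
        have h2 : B x' y = 0 := ih k (l+1) x' y (by omega) hkx' hly
        have h3 : B x' y' = 0 := ih k l x' y' (by omega) hkx' hly'
        have hgx : (g : V → V) x = lam • x + x' := by
          simp [hx', hf]
        have hgy : (g : V → V) y = mu • y + y' := by
          simp [hy', hf]
        have h4 : B x y = B (g x) (g y) := (hBg x y).symm
        rw [hgx, hgy] at h4
        simp only [map_add, map_smul, LinearMap.add_apply, LinearMap.smul_apply,
          smul_eq_mul, h1, h2, h3, mul_zero, add_zero] at h4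
        have : (1 - lam * mu) * B x y = 0 := by ring_nf; linear_combination h4
        rcases mul_eq_zero.mp this with h | h
        · exact absurd (by linear_combination -h) hlm
        · exact h
  exact key (k + l) k l x y le_rfl hk hl
end

section
/- Let V be a finite-dimensional vector space over ℂ, B a nondegenerate symmetric bilinear form on V, and g : V ≃ V a linear automorphism preserving B, i.e. B(g x, g y) = B(x, y) for all x, y ∈ V. Let λ ∈ ℂ with λ ≠ 0. Then the pairing of B between the generalized eigenspace of g with eigenvalue λ and the generalized eigenspace of g with eigenvalue λ⁻¹ is nondegenerate: for every nonzero x in the generalized eigenspace with eigenvalue λ there exists y in the generalized eigenspace with eigenvalue λ⁻¹ such that B(x, y) ≠ 0. -/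
/-- If a linear automorphism `g` of a finite-dimensional complex vector space preserves a
nondegenerate symmetric bilinear form `B`, then for `λ ≠ 0` the pairing of `B` between the
generalized eigenspace of `g` with eigenvalue `λ` and the one with eigenvalue `λ⁻¹` is
nondegenerate. -/
theorem maxGenEigenspace_pairing_nondegenerate
    (V : Type*) [AddCommGroup V] [Module ℂ V] [FiniteDimensional ℂ V]
    (B : V →ₗ[ℂ] V →ₗ[ℂ] ℂ) (hBsymm : ∀ x y : V, B x y = B y x)
    (hBnondeg : ∀ x : V, (∀ y : V, B x y = 0) → x = 0)
    (g : V ≃ₗ[ℂ] V) (hBg : ∀ x y : V, B (g x) (g y) = B x y)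
    (lam : ℂ) (hlam : lam ≠ 0) (x : V)
    (hx : x ∈ Module.End.maxGenEigenspace g.toLinearMap lam) (hx0 : x ≠ 0) :
    ∃ y ∈ Module.End.maxGenEigenspace g.toLinearMap lam⁻¹, B x y ≠ 0 := by
  -- orthogonality between generalized eigenspaces with lam * mu ≠ 1
  have orth : ∀ (mu : ℂ), lam * mu ≠ 1 → ∀ (k m n : ℕ) (u v : V), m + n ≤ k →
      ((g.toLinearMap - lam • 1) ^ m) u = 0 → ((g.toLinearMap - mu • 1) ^ n) v = 0 →
      B u v = 0 := by
    intro mu hne k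
    induction k with
    | zero =>
      intro m n u v hmn hu hv
      obtain ⟨rfl, rfl⟩ : m = 0 ∧ n = 0 := by omega
      simp only [pow_zero, Module.End.one_apply] at hu
      simp [hu]
    | succ k ih =>
      intro m n u v hmn hu hv
      match m, n with
      | 0, n =>
        simp only [pow_zero, Module.End.one_apply] at hu
        simp [hu]
      | m + 1, 0 =>
        simp only [pow_zero, Module.End.one_apply] at hv
        simp [hv]
      | m + 1, n + 1 =>
        set u' := (g.toLinearMap - lam • 1) u with hu'def
        set v' := (g.toLinearMap - mu • 1) v with hv'def
        have hu' : ((g.toLinearMap - lam • 1) ^ m) u' = 0 := by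
          rw [hu'def, ← Module.End.mul_apply, ← pow_succ]; exact hu
        have hv' : ((g.toLinearMap - mu • 1) ^ n) v' = 0 := by
          rw [hv'def, ← Module.End.mul_apply, ← pow_succ]; exact hv
        have hgu : g u = u' + lam • u := by
          simp [hu'def, sub_add_cancel]
        have hgv : g v = v' + mu • v := by
          simp [hv'def, sub_add_cancel]
        have key : B u v = B u' v' + mu * B u' v + lam * B u v' + lam * mu * B u v := by
          have := hBg u v
          rw [hgu, hgv] at this
          simp only [map_add, map_smul, LinearMap.add_apply, LinearMap.smul_apply,
            smul_eq_mul] at this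
          linear_combination -this
        have h1 : B u' v' = 0 := ih m n u' v' (by omega) hu' hv'
        have h2 : B u' v = 0 := ih m (n + 1) u' v (by omega) hu' hv
        have h3 : B u v' = 0 := ih (m + 1) n u v' (by omega) hu hv'
        rw [h1, h2, h3] at key
        have : (1 - lam * mu) * B u v = 0 := by linear_combination key
        rcases mul_eq_zero.mp this with h | h
        · exact absurd (by linear_combination -h) hne
        · exact h
  by_contra hcon
  push_neg at hcon
  apply hx0
  apply hBnondeg
  intro y
  have hmem : ∀ μ : ℂ, Module.End.maxGenEigenspace g.toLinearMap μ ≤ LinearMap.ker (B x) := by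
    intro μ z hz
    by_cases hμ : μ = lam⁻¹
    · subst hμ; exact hcon z hz
    · have hne : lam * μ ≠ 1 := fun he => hμ (by field_simp; linear_combination he)
      rw [Module.End.mem_maxGenEigenspace] at hz
      obtain ⟨n, hn⟩ := hz
      obtain ⟨m, hm⟩ := (Module.End.mem_maxGenEigenspace _ _ _).mp hx
      exact orth μ hne (m + n) m n x z le_rfl hm hn
  have htop : (⊤ : Submodule ℂ V) ≤ LinearMap.ker (B x) := by
    rw [← Module.End.iSup_maxGenEigenspace_eq_top g.toLinearMap]
    exact iSup_le hmem
  exact htop (Submodule.mem_top : y ∈ ⊤)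
end

section
/- Let V be a finite-dimensional vector space over ℂ, B a symmetric bilinear form on V, and g : V ≃ V a linear automorphism preserving B, i.e. B(g x, g y) = B(x, y) for all x, y ∈ V. Let s : V → V be a ℂ-linear map such that s x = λ • x for every λ ∈ ℂ and every x in the generalized eigenspace of g with eigenvalue λ. Then B is invariant under s: B(s x, s y) = B(x, y) for all x, y ∈ V. -/
open Module

/-- Orthogonality of generalized eigenspaces for non-reciprocal eigenvalues. -/
lemma gen_eig_orth
    {V : Type*} [AddCommGroup V] [Module ℂ V]
    (B : V →ₗ[ℂ] V →ₗ[ℂ] ℂ)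
    (g : V ≃ₗ[ℂ] V) (hBg : ∀ x y : V, B (g x) (g y) = B x y)
    (lam mu : ℂ) (hlm : lam * mu ≠ 1) :
    ∀ (k l : ℕ) (x y : V),
      ((g.toLinearMap - lam • 1) ^ k) x = 0 →
      ((g.toLinearMap - mu • 1) ^ l) y = 0 → B x y = 0 := by
  intro k
  induction k with
  | zero =>
    intro l x y hx hy
    simp only [pow_zero, Module.End.one_apply] at hx
    simp [hx]
  | succ k ihk =>
    intro l
    induction l with
    | zero =>
      intro x y hx hy
      simp only [pow_zero, Module.End.one_apply] at hy
      simp [hy]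
    | succ l ihl =>
      intro x y hx hy
      set x' := (g.toLinearMap - lam • 1) x with hx'def
      set y' := (g.toLinearMap - mu • 1) y with hy'def
      have hx' : ((g.toLinearMap - lam • 1) ^ k) x' = 0 := by
        rw [hx'def, ← Module.End.mul_apply, ← pow_succ]; exact hx
      have hy' : ((g.toLinearMap - mu • 1) ^ l) y' = 0 := by
        rw [hy'def, ← Module.End.mul_apply, ← pow_succ]; exact hy
      have hgx : g x = lam • x + x' := by
        simp [hx'def, LinearMap.sub_apply, LinearMap.smul_apply]
      have hgy : g y = mu • y + y' := by
        simp [hy'def, LinearMap.sub_apply, LinearMap.smul_apply]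
      have h1 : B x y = B (g x) (g y) := (hBg x y).symm
      rw [hgx, hgy] at h1
      have e1 : B x y' = 0 := ihl x y' hx hy'
      have e2 : B x' y = 0 := ihk (l+1) x' y hx' hy
      have e3 : B x' y' = 0 := ihk l x' y' hx' hy'
      simp only [map_add, map_smul, LinearMap.add_apply, LinearMap.smul_apply,
        smul_eq_mul, e1, e2, e3, mul_zero, add_zero, zero_add] at h1
      have h2 : (1 - lam * mu) * B x y = 0 := by linear_combination h1
      rcases mul_eq_zero.mp h2 with h | h
      · exact absurd (by linear_combination -h) hlm
      · exact h

/-- If a linear automorphism `g` of a finite-dimensional complex vector space preserves a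
symmetric bilinear form `B`, then so does the semisimple part `s` of `g`, i.e. the linear
map acting as the scalar `λ` on each generalized eigenspace of `g` with eigenvalue `λ`. -/
theorem bilin_invariant_under_semisimplePart
    (V : Type*) [AddCommGroup V] [Module ℂ V] [FiniteDimensional ℂ V]
    (B : V →ₗ[ℂ] V →ₗ[ℂ] ℂ) (hBsymm : ∀ x y : V, B x y = B y x)
    (g : V ≃ₗ[ℂ] V) (hBg : ∀ x y : V, B (g x) (g y) = B x y)
    (s : V →ₗ[ℂ] V)
    (hs : ∀ (lam : ℂ) (x : V),
      x ∈ Module.End.maxGenEigenspace g.toLinearMap lam → s x = lam • x)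
    (x y : V) : B (s x) (s y) = B x y := by
  have key : ∀ (lam : ℂ) (x : V), x ∈ Module.End.maxGenEigenspace g.toLinearMap lam →
      ∀ (mu : ℂ) (y : V), y ∈ Module.End.maxGenEigenspace g.toLinearMap mu →
      B (s x) (s y) = B x y := by
    intro lam x hx mu y hy
    rw [hs lam x hx, hs mu y hy]
    simp only [map_smul, LinearMap.smul_apply, smul_eq_mul]
    by_cases h : lam * mu = 1
    · rw [← mul_assoc, mul_comm mu lam, h, one_mul]
    · obtain ⟨k, hk⟩ := (Module.End.mem_maxGenEigenspace _ _ _).mp hx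
      obtain ⟨l, hl⟩ := (Module.End.mem_maxGenEigenspace _ _ _).mp hy
      rw [gen_eig_orth B g hBg lam mu h k l x y hk hl]
      ring
  -- now extend by bilinearity
  set D : V →ₗ[ℂ] V →ₗ[ℂ] ℂ := B.compl₁₂ s s - B with hD
  suffices hker : ∀ z : V, D z = 0 by
    have := congrFun (congrArg (fun f => (f : V → V →ₗ[ℂ] ℂ)) (funext hker)) x
    have h0 : D x y = 0 := by rw [hker x]; rfl
    simpa [hD, LinearMap.sub_apply, sub_eq_zero] using h0
  have htop := Module.End.iSup_maxGenEigenspace_eq_top (K := ℂ) (V := V) g.toLinearMap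
  intro z
  have hz : z ∈ (⊤ : Submodule ℂ V) := trivial
  rw [← htop] at hz
  induction hz using Submodule.iSup_induction' with
  | mem lam x hx =>
    ext w
    have hw : w ∈ (⊤ : Submodule ℂ V) := trivial
    rw [← htop] at hw
    induction hw using Submodule.iSup_induction' with
    | mem mu w hw =>
      have := key lam x hx mu w hw
      simp [hD, LinearMap.compl₁₂_apply, sub_eq_zero, this]
    | zero => simp
    | add w₁ w₂ _ _ h1 h2 =>
      simp only [map_add] at h1 h2 ⊢
      simp only [LinearMap.zero_apply] at h1 h2 ⊢
      rw [h1, h2, add_zero]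
  | zero => simp
  | add z₁ z₂ _ _ h1 h2 => rw [map_add, h1, h2, add_zero]
end

section
/- Let V be a vector space over ℂ, B a bilinear form on V, and N : V → V a nilpotent ℂ-linear map such that the exponential exp N = ∑_{k≥0} N^k / k! (a finite sum, since N is nilpotent) preserves B, i.e. B((exp N) x, (exp N) y) = B(x, y) for all x, y ∈ V. Then B(N x, y) + B(x, N y) = 0 for all x, y ∈ V. -/
open Finset Polynomial

/-- Triangle reindexing: a double sum over a square, where terms with `k ≤ i + j` vanish,
equals the sum over the triangle indexed by the diagonal. -/
lemma tri_sum {M : Type*} [AddCommMonoid M] (k : ℕ) (f : ℕ → ℕ → M)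
    (hf : ∀ i j, k ≤ i + j → f i j = 0) :
    ∑ i ∈ range k, ∑ j ∈ range k, f i j = ∑ m ∈ range k, ∑ i ∈ range (m + 1), f i (m - i) := by
  rw [← Finset.sum_product', Finset.sum_sigma']
  rw [← Finset.sum_filter_add_sum_filter_not (range k ×ˢ range k) (fun p => p.1 + p.2 < k)]
  have h2 : ∑ p ∈ (range k ×ˢ range k).filter (fun p => ¬ p.1 + p.2 < k), f p.1 p.2 = 0 :=
    Finset.sum_eq_zero fun p hp => hf _ _ (not_lt.mp (Finset.mem_filter.mp hp).2)
  rw [h2, add_zero]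
  refine Finset.sum_nbij' (fun p => ⟨p.1 + p.2, p.1⟩) (fun q => (q.2, q.1 - q.2)) ?_ ?_ ?_ ?_ ?_
  · intro p hp
    simp only [Finset.mem_filter, Finset.mem_product, Finset.mem_range] at hp
    simp [Finset.mem_sigma, Finset.mem_range, hp.2, Nat.lt_succ_of_le, Nat.le_add_right]
  · intro q hq
    simp only [Finset.mem_sigma, Finset.mem_range, Nat.lt_succ_iff] at hq
    simp only [Finset.mem_filter, Finset.mem_product, Finset.mem_range]
    refine ⟨⟨lt_of_le_of_lt hq.2 hq.1, ?_⟩, ?_⟩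
    · exact lt_of_le_of_lt (Nat.sub_le _ _) hq.1
    · omega
  · intro p hp; simp
  · intro q hq
    simp only [Finset.mem_sigma, Finset.mem_range, Nat.lt_succ_iff] at hq
    ext <;> simp <;> omega
  · intro p hp; simp

lemma exp_trunc_mul {V : Type*} [AddCommGroup V] [Module ℂ V]
    (N : Module.End ℂ V) (k : ℕ) (hk : N ^ k = 0) (s t : ℂ) :
    (∑ i ∈ range k, ((i.factorial : ℂ)⁻¹ * s ^ i) • N ^ i) *
      (∑ j ∈ range k, ((j.factorial : ℂ)⁻¹ * t ^ j) • N ^ j) =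
    ∑ m ∈ range k, ((m.factorial : ℂ)⁻¹ * (s + t) ^ m) • N ^ m := by
  rw [Finset.sum_mul_sum]
  have step : ∀ i j : ℕ,
      (((i.factorial : ℂ)⁻¹ * s ^ i) • N ^ i) * (((j.factorial : ℂ)⁻¹ * t ^ j) • N ^ j)
      = (((i.factorial : ℂ)⁻¹ * s ^ i) * ((j.factorial : ℂ)⁻¹ * t ^ j)) • N ^ (i + j) := by
    intro i j
    rw [smul_mul_smul_comm, pow_add]
  simp_rw [step]
  rw [tri_sum k (fun i j => (((i.factorial : ℂ)⁻¹ * s ^ i) * ((j.factorial : ℂ)⁻¹ * t ^ j)) • N ^ (i + j))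
      (by intro i j hij; rw [pow_eq_zero_of_le hij hk, smul_zero])]
  refine Finset.sum_congr rfl fun m hm => ?_
  rw [Commute.add_pow (Commute.all s t), Finset.mul_sum, Finset.sum_smul]
  refine Finset.sum_congr rfl fun i hi => ?_
  rw [Finset.mem_range, Nat.lt_succ_iff] at hi
  rw [Nat.add_sub_cancel' hi]
  congr 1
  have hch := Nat.choose_mul_factorial_mul_factorial hi
  have h1 : (i.factorial : ℂ) ≠ 0 := Nat.cast_ne_zero.mpr i.factorial_ne_zero
  have h2 : ((m - i).factorial : ℂ) ≠ 0 := Nat.cast_ne_zero.mpr (m - i).factorial_ne_zero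
  have h3 : (m.factorial : ℂ) ≠ 0 := Nat.cast_ne_zero.mpr m.factorial_ne_zero
  have hch' : ((m.choose i : ℂ)) * i.factorial * (m - i).factorial = m.factorial := by
    exact_mod_cast hch
  field_simp
  linear_combination (-(s ^ i * t ^ (m - i))) * hch'



/-- If `N` is a nilpotent linear endomorphism of a complex vector space `V` whose exponential
`exp N = ∑_{i < k} N^i / i!` (a finite sum, `N ^ k = 0`) preserves a bilinear form `B`, then
`B(N x, y) + B(x, N y) = 0` for all `x, y`. -/
theorem nilpotent_exp_invariance_skew
    (V : Type*) [AddCommGroup V] [Module ℂ V]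
    (B : V →ₗ[ℂ] V →ₗ[ℂ] ℂ) (N : Module.End ℂ V)
    (k : ℕ) (hk : N ^ k = 0)
    (hexp : ∀ x y : V,
      B ((∑ i ∈ Finset.range k, ((i.factorial : ℂ)⁻¹) • N ^ i) x)
        ((∑ i ∈ Finset.range k, ((i.factorial : ℂ)⁻¹) • N ^ i) y) = B x y)
    (x y : V) : B (N x) y + B x (N y) = 0 := by
  set K := k + 2 with hK
  have hkK : k ≤ K := by omega
  have hNK : N ^ K = 0 := pow_eq_zero_of_le hkK hk
  set E : ℂ → Module.End ℂ V := fun t => ∑ i ∈ range K, ((i.factorial : ℂ)⁻¹ * t ^ i) • N ^ i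
    with hE
  have hE1 : E 1 = ∑ i ∈ Finset.range k, ((i.factorial : ℂ)⁻¹) • N ^ i := by
    rw [hE]
    simp only [one_pow, mul_one]
    exact (Finset.sum_subset (Finset.range_subset_range.mpr hkK) (fun i _ hi => by
      rw [pow_eq_zero_of_le (le_of_not_gt fun h => hi (Finset.mem_range.mpr h)) hk,
        smul_zero])).symm
  -- exp N preserves B (length-K version)
  have hexp' : ∀ u v : V, B (E 1 u) (E 1 v) = B u v := by
    intro u v; rw [hE1]; exact hexp u v
  -- powers of E 1
  have hEpow : ∀ n : ℕ, E 1 ^ n = E (n : ℂ) := by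
    intro n
    induction n with
    | zero =>
      simp only [pow_zero, Nat.cast_zero, hE]
      rw [eq_comm]
      rw [Finset.sum_eq_single 0]
      · norm_num
      · intro i _ hi
        rw [zero_pow hi, mul_zero, zero_smul]
      · intro h; simp [hK] at h
    | succ n ih =>
      rw [pow_succ, ih, hE]
      simp only
      rw [exp_trunc_mul N K hNK (n : ℂ) 1]
      push_cast
      rfl
  -- B is preserved by all powers
  have hBpow : ∀ n : ℕ, B ((E 1 ^ n) x) ((E 1 ^ n) y) = B x y := by
    intro n
    induction n with
    | zero => simp
    | succ n ih =>
      rw [pow_succ', Module.End.mul_apply, Module.End.mul_apply, hexp' _ _]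
      exact ih
  -- the polynomial
  set c : ℕ → ℕ → ℂ := fun i j => ((i.factorial : ℂ)⁻¹ * (j.factorial : ℂ)⁻¹) *
    (B ((N ^ i) x) ((N ^ j) y)) with hc
  set P : Polynomial ℂ :=
    (∑ i ∈ range K, ∑ j ∈ range K, C (c i j) * X ^ (i + j)) - C (B x y) with hP
  have heval : ∀ t : ℂ, P.eval t = B (E t x) (E t y) - B x y := by
    intro t
    rw [hP]
    simp only [eval_sub, eval_finset_sum, eval_mul, eval_C, eval_pow, eval_X]
    congr 1
    rw [hE]
    simp only [LinearMap.sum_apply, LinearMap.smul_apply, map_sum, map_smul,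
      LinearMap.coe_sum, Finset.sum_apply, smul_eq_mul]
    rw [Finset.sum_comm]
    refine Finset.sum_congr rfl fun j _ => ?_
    rw [Finset.mul_sum]
    refine Finset.sum_congr rfl fun i _ => ?_
    rw [hc]
    dsimp only
    rw [pow_add]
    ring
  have hroot : ∀ n : ℕ, P.eval (n : ℂ) = 0 := by
    intro n
    rw [heval, ← hEpow n, hBpow n, sub_self]
  have hP0 : P = 0 := by
    refine Polynomial.eq_zero_of_infinite_isRoot P ?_
    apply Set.Infinite.mono (s := Set.range (fun n : ℕ => (n : ℂ)))
    · rintro _ ⟨n, rfl⟩; exact hroot n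
    · exact Set.infinite_range_of_injective Nat.cast_injective
  -- extract coefficient 1
  have hcoeff : P.coeff 1 = 0 := by rw [hP0]; simp
  rw [hP] at hcoeff
  rw [Polynomial.coeff_sub, Polynomial.coeff_C] at hcoeff
  simp only [Polynomial.finset_sum_coeff, Polynomial.coeff_C_mul, Polynomial.coeff_X_pow] at hcoeff
  norm_num at hcoeff
  -- reduce the double sum to i, j < 2
  have hsub : ∀ S : Finset ℕ, (∑ i ∈ S, ∑ j ∈ range K, (if 1 = i + j then c i j else 0))
      = ∑ i ∈ S, ∑ j ∈ range 2, (if 1 = i + j then c i j else 0) := by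
    intro S
    refine Finset.sum_congr rfl fun i _ => ?_
    refine (Finset.sum_subset (Finset.range_subset_range.mpr (by omega)) fun j _ hj => ?_).symm
    have : ¬ (1 = i + j) := by
      have := le_of_not_gt fun h => hj (Finset.mem_range.mpr h); omega
    simp [this]
  have hsub2 : (∑ i ∈ range K, ∑ j ∈ range K, (if 1 = i + j then c i j else 0))
      = ∑ i ∈ range 2, ∑ j ∈ range 2, (if 1 = i + j then c i j else 0) := by
    rw [hsub]
    refine (Finset.sum_subset (Finset.range_subset_range.mpr (by omega)) fun i _ hi => ?_).symm
    have hige : 2 ≤ i := le_of_not_gt fun h => hi (Finset.mem_range.mpr h)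
    refine Finset.sum_eq_zero fun j _ => ?_
    have : ¬ (1 = i + j) := by omega
    simp [this]
  rw [hsub2] at hcoeff
  simp only [Finset.sum_range_succ, Finset.sum_range_zero] at hcoeff
  norm_num [hc] at hcoeff
  linear_combination hcoeff
end
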